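/- Let A, A' be real I×R matrices, B, B' real J×R matrices, and C, C' real K×R matrices, and let M₁ ≥ 0 be a real number such that every column of each of the six matrices A, B, C, A', B', C' has squared Euclidean norm at most M₁. Then ‖KR(A,B,C) − KR(A',B',C')‖_F ≤ 3·R·M₁ · sqrt(‖A − A'‖_F² + ‖B − B'‖_F² + ‖C − C'‖_F²). -/

import Mathlib

open Finset

lemma my_sqrt_add_le (x y : ℝ) (hx : 0 ≤ x) (hy : 0 ≤ y) :
    Real.sqrt (x + y) ≤ Real.sqrt x + Real.sqrt y := by
  rw [show x + y = Real.sqrt x ^ 2 + Real.sqrt y ^ 2 by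
    rw [Real.sq_sqrt hx, Real.sq_sqrt hy]]
  have h := Real.sqrt_le_sqrt (show Real.sqrt x ^2 + Real.sqrt y ^2 ≤ (Real.sqrt x + Real.sqrt y)^2 by
    nlinarith [Real.sqrt_nonneg x, Real.sqrt_nonneg y])
  calc _ ≤ Real.sqrt ((Real.sqrt x + Real.sqrt y)^2) := h
    _ = _ := Real.sqrt_sq (by positivity)

lemma my_sqrt_sum_le {α : Type*} (s : Finset α) (f : α → ℝ) (hf : ∀ a ∈ s, 0 ≤ f a) :
    Real.sqrt (∑ a ∈ s, f a) ≤ ∑ a ∈ s, Real.sqrt (f a) := by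
  induction s using Finset.cons_induction with
  | empty => simp
  | cons a s ha ih =>
    rw [Finset.sum_cons, Finset.sum_cons]
    calc Real.sqrt (f a + ∑ x ∈ s, f x)
        ≤ Real.sqrt (f a) + Real.sqrt (∑ x ∈ s, f x) :=
          my_sqrt_add_le _ _ (hf a (Finset.mem_cons_self a s))
            (Finset.sum_nonneg fun x hx => hf x (Finset.mem_cons_of_mem hx))
      _ ≤ _ := by gcongr; exact ih fun x hx => hf x (Finset.mem_cons_of_mem hx)

lemma my_sqrt_factor {I J K : ℕ} (a : Fin I → ℝ) (b : Fin J → ℝ) (c : Fin K → ℝ) :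
    Real.sqrt (∑ p : Fin I × Fin J × Fin K, (a p.1 * b p.2.1 * c p.2.2) ^ 2)
      = Real.sqrt (∑ i, a i ^ 2) * Real.sqrt (∑ j, b j ^ 2) * Real.sqrt (∑ k, c k ^ 2) := by
  rw [← Real.sqrt_mul (by positivity), ← Real.sqrt_mul (by positivity)]
  congr 1
  rw [Fintype.sum_prod_type]
  simp_rw [Fintype.sum_prod_type, Finset.sum_mul, Finset.mul_sum]
  refine Finset.sum_congr rfl fun i _ => ?_
  rw [Finset.sum_comm]
  refine Finset.sum_congr rfl fun k _ => ?_
  rw [Finset.sum_mul]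
  exact Finset.sum_congr rfl fun j _ => by ring

-- Minkowski for three vectors
lemma my_l2_tri {ι : Type*} [Fintype ι] (u v w : ι → ℝ) :
    Real.sqrt (∑ p, (u p + v p + w p) ^ 2)
      ≤ Real.sqrt (∑ p, u p ^ 2) + Real.sqrt (∑ p, v p ^ 2) + Real.sqrt (∑ p, w p ^ 2) := by
  have key : ∀ x : EuclideanSpace ℝ ι, ‖x‖ = Real.sqrt (∑ p, x p ^ 2) := by
    intro x
    rw [EuclideanSpace.norm_eq]
    simp [Real.norm_eq_abs, sq_abs]
  let u' : EuclideanSpace ℝ ι := WithLp.toLp 2 u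
  let v' : EuclideanSpace ℝ ι := WithLp.toLp 2 v
  let w' : EuclideanSpace ℝ ι := WithLp.toLp 2 w
  have h : ‖u' + v' + w'‖ ≤ ‖u'‖ + ‖v'‖ + ‖w'‖ := norm_add₃_le
  rw [key u', key v', key w', key (u' + v' + w')] at h
  exact h

/-- The Khatri–Rao product of three matrices: the `(I·J·K) × R` matrix whose
entry at row `(i,j,k)` and column `r` is `A i r * B j r * C k r`. -/
def KhatriRao {I J K R : ℕ} (A : Matrix (Fin I) (Fin R) ℝ)
    (B : Matrix (Fin J) (Fin R) ℝ) (C : Matrix (Fin K) (Fin R) ℝ) :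
    Matrix (Fin I × Fin J × Fin K) (Fin R) ℝ :=
  fun p r => A p.1 r * B p.2.1 r * C p.2.2 r

/-- The Frobenius norm of a real matrix. -/
noncomputable def frob {m n : Type*} [Fintype m] [Fintype n]
    (M : Matrix m n ℝ) : ℝ :=
  Real.sqrt (∑ i, ∑ j, (M i j) ^ 2)

/-- Lemma 3 of the paper's convergence analysis (Appendix F): the Khatri–Rao
product is Lipschitz, with constant `C₃ = 3·R·M₁`, in the joint Frobenius norm
of the factor differences. -/
theorem atd_khatri_rao_lipschitz
    {I J K R : ℕ} (A A' : Matrix (Fin I) (Fin R) ℝ)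
    (B B' : Matrix (Fin J) (Fin R) ℝ) (C C' : Matrix (Fin K) (Fin R) ℝ)
    (M₁ : ℝ) (hM₁ : 0 ≤ M₁)
    (hA : ∀ r, ∑ i, (A i r) ^ 2 ≤ M₁) (hA' : ∀ r, ∑ i, (A' i r) ^ 2 ≤ M₁)
    (hB : ∀ r, ∑ j, (B j r) ^ 2 ≤ M₁) (hB' : ∀ r, ∑ j, (B' j r) ^ 2 ≤ M₁)
    (hC : ∀ r, ∑ k, (C k r) ^ 2 ≤ M₁) (hC' : ∀ r, ∑ k, (C' k r) ^ 2 ≤ M₁) :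
    frob (KhatriRao A B C - KhatriRao A' B' C')
      ≤ 3 * (R : ℝ) * M₁ *
        Real.sqrt (frob (A - A') ^ 2 + frob (B - B') ^ 2 + frob (C - C') ^ 2) := by
  set S := Real.sqrt (frob (A - A') ^ 2 + frob (B - B') ^ 2 + frob (C - C') ^ 2) with hS
  have hSnn : 0 ≤ S := Real.sqrt_nonneg _
  have hfq : ∀ {m n : ℕ} (M : Matrix (Fin m) (Fin n) ℝ),
      frob M ^ 2 = ∑ i, ∑ j, (M i j) ^ 2 := fun M => by
    rw [frob, Real.sq_sqrt (by positivity)]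
  have hfnn : ∀ {m n : ℕ} (M : Matrix (Fin m) (Fin n) ℝ), 0 ≤ frob M :=
    fun M => Real.sqrt_nonneg _
  have hMM : Real.sqrt M₁ * Real.sqrt M₁ = M₁ := Real.mul_self_sqrt hM₁
  -- columnwise bounds by S
  have hcol : ∀ {m : ℕ} (M : Matrix (Fin m) (Fin R) ℝ), frob M ≤ S →
      ∀ r, Real.sqrt (∑ i, (M i r) ^ 2) ≤ S := by
    intro m M hMS r
    calc Real.sqrt (∑ i, (M i r) ^ 2)
        ≤ Real.sqrt (frob M ^ 2) := by
          apply Real.sqrt_le_sqrt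
          rw [hfq]
          refine Finset.sum_le_sum fun i _ => ?_
          exact Finset.single_le_sum (f := fun r' => (M i r') ^ 2)
            (fun _ _ => sq_nonneg _) (Finset.mem_univ r)
      _ = frob M := Real.sqrt_sq (hfnn M)
      _ ≤ S := hMS
  have hAS : frob (A - A') ≤ S := by
    have h := Real.sqrt_le_sqrt (show frob (A - A') ^ 2
        ≤ frob (A - A') ^ 2 + frob (B - B') ^ 2 + frob (C - C') ^ 2 by
      nlinarith [sq_nonneg (frob (B - B')), sq_nonneg (frob (C - C'))])
    rwa [Real.sqrt_sq (hfnn _)] at h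
  have hBS : frob (B - B') ≤ S := by
    have h := Real.sqrt_le_sqrt (show frob (B - B') ^ 2
        ≤ frob (A - A') ^ 2 + frob (B - B') ^ 2 + frob (C - C') ^ 2 by
      nlinarith [sq_nonneg (frob (A - A')), sq_nonneg (frob (C - C'))])
    rwa [Real.sqrt_sq (hfnn _)] at h
  have hCS : frob (C - C') ≤ S := by
    have h := Real.sqrt_le_sqrt (show frob (C - C') ^ 2
        ≤ frob (A - A') ^ 2 + frob (B - B') ^ 2 + frob (C - C') ^ 2 by
      nlinarith [sq_nonneg (frob (A - A')), sq_nonneg (frob (B - B'))])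
    rwa [Real.sqrt_sq (hfnn _)] at h
  -- per-column bound
  have per_r : ∀ r : Fin R,
      Real.sqrt (∑ p, ((KhatriRao A B C - KhatriRao A' B' C') p r) ^ 2) ≤ 3 * M₁ * S := by
    intro r
    have hdec : ∀ p : Fin I × Fin J × Fin K,
        (KhatriRao A B C - KhatriRao A' B' C') p r =
          ((A - A') p.1 r * B p.2.1 r * C p.2.2 r)
            + (A' p.1 r * (B - B') p.2.1 r * C p.2.2 r)
            + (A' p.1 r * B' p.2.1 r * (C - C') p.2.2 r) := by
      intro p
      simp only [Matrix.sub_apply, KhatriRao]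
      ring
    have h1 : Real.sqrt (∑ p : Fin I × Fin J × Fin K,
        ((A - A') p.1 r * B p.2.1 r * C p.2.2 r) ^ 2) ≤ S * Real.sqrt M₁ * Real.sqrt M₁ := by
      rw [my_sqrt_factor (fun i => (A - A') i r) (fun j => B j r) (fun k => C k r)]
      exact mul_le_mul (mul_le_mul (hcol _ hAS r) (Real.sqrt_le_sqrt (hB r))
        (Real.sqrt_nonneg _) hSnn) (Real.sqrt_le_sqrt (hC r)) (Real.sqrt_nonneg _)
        (by positivity)
    have h2 : Real.sqrt (∑ p : Fin I × Fin J × Fin K,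
        (A' p.1 r * (B - B') p.2.1 r * C p.2.2 r) ^ 2) ≤ Real.sqrt M₁ * S * Real.sqrt M₁ := by
      rw [my_sqrt_factor (fun i => A' i r) (fun j => (B - B') j r) (fun k => C k r)]
      exact mul_le_mul (mul_le_mul (Real.sqrt_le_sqrt (hA' r)) (hcol _ hBS r)
        (Real.sqrt_nonneg _) (Real.sqrt_nonneg _)) (Real.sqrt_le_sqrt (hC r))
        (Real.sqrt_nonneg _) (by positivity)
    have h3 : Real.sqrt (∑ p : Fin I × Fin J × Fin K,
        (A' p.1 r * B' p.2.1 r * (C - C') p.2.2 r) ^ 2) ≤ Real.sqrt M₁ * Real.sqrt M₁ * S := by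
      rw [my_sqrt_factor (fun i => A' i r) (fun j => B' j r) (fun k => (C - C') k r)]
      exact mul_le_mul (mul_le_mul (Real.sqrt_le_sqrt (hA' r)) (Real.sqrt_le_sqrt (hB' r))
        (Real.sqrt_nonneg _) (Real.sqrt_nonneg _)) (hcol _ hCS r)
        (Real.sqrt_nonneg _) (by positivity)
    have htri := my_l2_tri (fun p : Fin I × Fin J × Fin K => (A - A') p.1 r * B p.2.1 r * C p.2.2 r)
      (fun p => A' p.1 r * (B - B') p.2.1 r * C p.2.2 r)
      (fun p => A' p.1 r * B' p.2.1 r * (C - C') p.2.2 r)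
    calc Real.sqrt (∑ p, ((KhatriRao A B C - KhatriRao A' B' C') p r) ^ 2)
        = Real.sqrt (∑ p : Fin I × Fin J × Fin K,
            (((A - A') p.1 r * B p.2.1 r * C p.2.2 r)
              + (A' p.1 r * (B - B') p.2.1 r * C p.2.2 r)
              + (A' p.1 r * B' p.2.1 r * (C - C') p.2.2 r)) ^ 2) := by
          congr 1
          exact Finset.sum_congr rfl fun p _ => by rw [hdec p]
      _ ≤ _ := htri
      _ ≤ S * Real.sqrt M₁ * Real.sqrt M₁ + Real.sqrt M₁ * S * Real.sqrt M₁
            + Real.sqrt M₁ * Real.sqrt M₁ * S := by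
          exact add_le_add (add_le_add h1 h2) h3
      _ = 3 * M₁ * S := by nlinarith [hMM]
  -- assemble
  have hswap : (∑ p, ∑ r, ((KhatriRao A B C - KhatriRao A' B' C') p r) ^ 2)
      = ∑ r, ∑ p, ((KhatriRao A B C - KhatriRao A' B' C') p r) ^ 2 := Finset.sum_comm
  rw [frob, hswap]
  calc Real.sqrt (∑ r, ∑ p, ((KhatriRao A B C - KhatriRao A' B' C') p r) ^ 2)
      ≤ ∑ r : Fin R, Real.sqrt (∑ p, ((KhatriRao A B C - KhatriRao A' B' C') p r) ^ 2) :=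
        my_sqrt_sum_le _ _ (fun a _ => by positivity)
    _ ≤ ∑ _r : Fin R, 3 * M₁ * S := Finset.sum_le_sum fun r _ => per_r r
    _ = (R : ℝ) * (3 * M₁ * S) := by
        rw [Finset.sum_const, Finset.card_univ, Fintype.card_fin, nsmul_eq_mul]
    _ = 3 * (R : ℝ) * M₁ * S := by ring
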